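/- Assume π_s > 0 for every s ∈ S. If α ∈ ℝ^N has nonnegative entries and α ∉ V, then the face F_α = {x ∈ P : Σ_{n=1}^N α_n x_n = b(α)} of the achievable-rate polytope P is not a facet of P: the dimension of F_α (the rank of the direction of the affine span of F_α) is strictly less than dim(P) − 1. -/

import Mathlib

open MeasureTheory ProbabilityTheory Finset Filter

noncomputable section

/-- Channel state space `S`: N×K matrices with entries in {0,…,M}. -/
abbrev ChanState (N K M : ℕ) := Fin N → Fin K → Fin (M + 1)

/-- The real-valued channel matrix `C_s` of a channel state `s`. -/
def Cmat {N K M : ℕ} (s : ChanState N K M) : Fin N → Fin K → ℝ :=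
  fun n k => ((s n k : ℕ) : ℝ)

/-- The 0/1 allocation matrix `I ∈ 𝓘` determined by an assignment `f` of servers to
queues: column `k` has its single 1 in row `f k`. -/
def allocMat {N K : ℕ} (f : Fin K → Fin N) : Fin N → Fin K → ℝ :=
  fun n k => if f k = n then 1 else 0

/-- The weight `Σ_n Σ_k α_n c_{n,k} I_{n,k}` of the allocation matrix `I = allocMat f`. -/
def weight {N K : ℕ} (α : Fin N → ℝ) (c : Fin N → Fin K → ℝ) (f : Fin K → Fin N) : ℝ :=
  ∑ n, ∑ k, α n * c n k * allocMat f n k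

/-- `max_{I ∈ 𝓘} Σ_n Σ_k α_n c_{n,k} I_{n,k}`. -/
def maxWeight {N K : ℕ} [NeZero N] (α : Fin N → ℝ) (c : Fin N → Fin K → ℝ) : ℝ :=
  Finset.univ.sup' Finset.univ_nonempty (weight α c)

/-- `b(α) = Σ_{s∈S} π_s max_{I∈𝓘} Σ_n Σ_k α_n (C_s)_{n,k} I_{n,k}`. -/
def bCoef {N K M : ℕ} [NeZero N] (π : ChanState N K M → ℝ) (α : Fin N → ℝ) : ℝ :=
  ∑ s : ChanState N K M, π s * maxWeight α (Cmat s)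

/-- The rate vector `R^{(g)}` of the deterministic policy `g`. -/
def rateVec {N K M : ℕ} (π : ChanState N K M → ℝ)
    (g : ChanState N K M → Fin K → Fin N) : Fin N → ℝ :=
  fun n => ∑ s : ChanState N K M, π s * ∑ k, Cmat s n k * allocMat (g s) n k

/-- The achievable-rate polytope `P`, the convex hull of the rate vectors of the
deterministic policies. -/
def ratePolytope {N K M : ℕ} (π : ChanState N K M → ℝ) : Set (Fin N → ℝ) :=
  convexHull ℝ {r | ∃ g : ChanState N K M → Fin K → Fin N, r = rateVec π g}

/-- `W`: products of N−1 factors from {0,…,M}, viewed inside ℝ. -/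
def Wset (N M : ℕ) : Set ℝ :=
  {w | ∃ m : Fin (N - 1) → ℕ, (∀ j, m j ≤ M) ∧ w = ∏ j, (m j : ℝ)}

/-- The set `V` of nonnegative weight vectors from the paper. -/
def Vset (N M : ℕ) : Set (Fin N → ℝ) :=
  {α | (∀ n, 0 ≤ α n) ∧
    ∀ U : Finset (Fin N), U.Nonempty → U ≠ Finset.univ →
      (∃ i ∈ U, α i ≠ 0) → (∃ j ∈ Uᶜ, α j ≠ 0) →
      ∃ i ∈ U, ∃ j ∈ Uᶜ, ∃ m ∈ Finset.Icc 1 M, ∃ n ∈ Finset.Icc 1 M,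
        0 < α i ∧ 0 < α j ∧ α i * (m : ℝ) = α j * (n : ℝ)}

/-- The product Bernoulli distribution on ON-OFF (M = 1) channel states. -/
def bernoulliPi {N K : ℕ} (p : Fin N → Fin K → ℝ) : ChanState N K 1 → ℝ :=
  fun s => ∏ n, ∏ k, (if (s n k : ℕ) = 1 then p n k else 1 - p n k)

end

section Aux

variable {N K M : ℕ} [NeZero N]

lemma weight_eq (α : Fin N → ℝ) (c : Fin N → Fin K → ℝ) (f : Fin K → Fin N) :
    weight α c f = ∑ k, α (f k) * c (f k) k := by
  unfold weight allocMat
  rw [Finset.sum_comm]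
  refine Finset.sum_congr rfl fun k _ => ?_
  simp [mul_ite, Finset.sum_ite_eq']

lemma maxWeight_eq (α : Fin N → ℝ) (c : Fin N → Fin K → ℝ) :
    maxWeight α c = ∑ k, Finset.univ.sup' Finset.univ_nonempty (fun n => α n * c n k) := by
  apply le_antisymm
  · apply Finset.sup'_le
    intro f _
    rw [weight_eq]
    exact Finset.sum_le_sum fun k _ => Finset.le_sup' (fun n => α n * c n k) (Finset.mem_univ (f k))
  · have h : ∀ k : Fin K, ∃ n : Fin N,
        Finset.univ.sup' Finset.univ_nonempty (fun n => α n * c n k) = α n * c n k := by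
      intro k
      obtain ⟨n, -, hn⟩ := Finset.exists_mem_eq_sup' Finset.univ_nonempty (fun n => α n * c n k)
      exact ⟨n, hn⟩
    choose F hF using h
    have h1 : ∑ k, Finset.univ.sup' Finset.univ_nonempty (fun n => α n * c n k)
        = weight α c F := by
      rw [weight_eq]
      exact Finset.sum_congr rfl fun k _ => hF k
    rw [h1]
    exact Finset.le_sup' _ (Finset.mem_univ F)

/-- the key per-column lemma -/
lemma col_opt (β γ τ d : Fin N → ℝ) (hβ : ∀ n, 0 ≤ β n) (hγ : ∀ n, 0 ≤ γ n)
    (hd : ∀ n, 0 ≤ d n) (hτ : ∀ n, τ n = β n + γ n)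
    (hdisj : ∀ n, β n = 0 ∨ γ n = 0)
    (htie : Finset.univ.sup' Finset.univ_nonempty (fun n => β n * d n)
        = Finset.univ.sup' Finset.univ_nonempty (fun n => γ n * d n) →
        Finset.univ.sup' Finset.univ_nonempty (fun n => β n * d n) = 0)
    (n₀ : Fin N)
    (hopt : τ n₀ * d n₀
        = Finset.univ.sup' Finset.univ_nonempty (fun n => τ n * d n)) :
    β n₀ * d n₀ = if Finset.univ.sup' Finset.univ_nonempty (fun n => γ n * d n)
        < Finset.univ.sup' Finset.univ_nonempty (fun n => β n * d n)
      then Finset.univ.sup' Finset.univ_nonempty (fun n => β n * d n) else 0 := by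
  set A := Finset.univ.sup' Finset.univ_nonempty (fun n => β n * d n) with hA
  set B := Finset.univ.sup' Finset.univ_nonempty (fun n => γ n * d n) with hB
  set T := Finset.univ.sup' Finset.univ_nonempty (fun n => τ n * d n) with hT
  have eβ : ∀ n, β n * d n ≤ A := fun n => Finset.le_sup' (fun n => β n * d n) (Finset.mem_univ n)
  have eγ : ∀ n, γ n * d n ≤ B := fun n => Finset.le_sup' (fun n => γ n * d n) (Finset.mem_univ n)
  have eτ : ∀ n, τ n * d n ≤ T := fun n => Finset.le_sup' (fun n => τ n * d n) (Finset.mem_univ n)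
  have hA0 : 0 ≤ A := le_trans (mul_nonneg (hβ n₀) (hd n₀)) (eβ n₀)
  have hB0 : 0 ≤ B := le_trans (mul_nonneg (hγ n₀) (hd n₀)) (eγ n₀)
  have hAT : A ≤ T := by
    obtain ⟨i, -, hi⟩ := Finset.exists_mem_eq_sup' Finset.univ_nonempty (fun n => β n * d n)
    rw [← hA] at hi
    rw [hi]
    calc β i * d i ≤ τ i * d i := by
          rw [hτ i]; nlinarith [hγ i, hd i]
      _ ≤ T := eτ i
  have hBT : B ≤ T := by
    obtain ⟨j, -, hj⟩ := Finset.exists_mem_eq_sup' Finset.univ_nonempty (fun n => γ n * d n)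
    rw [← hB] at hj
    rw [hj]
    calc γ j * d j ≤ τ j * d j := by
          rw [hτ j]; nlinarith [hβ j, hd j]
      _ ≤ T := eτ j
  have hTmax : T ≤ max A B := by
    obtain ⟨p, -, hp⟩ := Finset.exists_mem_eq_sup' Finset.univ_nonempty (fun n => τ n * d n)
    rw [← hT] at hp
    rw [hp, hτ p]
    rcases hdisj p with h | h
    · rw [h, zero_add]
      exact le_max_of_le_right (eγ p)
    · rw [h, add_zero]
      exact le_max_of_le_left (eβ p)
  by_cases hBA : B < A
  · rw [if_pos hBA]
    have hTA : T = A := le_antisymm (by rw [max_eq_left hBA.le] at hTmax; exact hTmax) hAT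
    rcases hdisj n₀ with h | h
    · exfalso
      rw [hτ n₀, h, zero_add] at hopt
      have := eγ n₀
      rw [hopt, hTA] at this
      exact absurd this (not_le.mpr hBA)
    · rw [hτ n₀, h, add_zero] at hopt
      rw [hopt, hTA]
  · rw [if_neg hBA]
    push_neg at hBA
    rcases eq_or_lt_of_le hBA with hEq | hlt
    · have hA0' : A = 0 := htie hEq
      have h1 : β n₀ * d n₀ ≤ 0 := by rw [← hA0']; exact eβ n₀
      exact le_antisymm h1 (mul_nonneg (hβ n₀) (hd n₀))
    · -- A < B
      have hTB : T = B := le_antisymm (by rw [max_eq_right hBA] at hTmax; exact hTmax) hBT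
      rcases hdisj n₀ with h | h
      · rw [h, zero_mul]
      · exfalso
        rw [hτ n₀, h, add_zero] at hopt
        have := eβ n₀
        rw [hopt, hTB] at this
        exact absurd this (not_le.mpr hlt)

end Aux
/-- if all channel states have positive probability and α is a nonnegative
weight vector not in V, then the face of P cut out by the hyperplane Σ_n α_n x_n = b(α)
has dimension strictly less than dim(P) − 1, i.e. it is not a facet of P. -/
theorem stmt_4
    {N K M : ℕ} [NeZero N] [NeZero K] [NeZero M]
    (π : ChanState N K M → ℝ) (hπpos : ∀ s, 0 < π s) (hπ1 : ∑ s : ChanState N K M, π s = 1)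
    (α : Fin N → ℝ) (hα : ∀ n, 0 ≤ α n) (hαV : α ∉ Vset N M) :
    Module.finrank ℝ
        (affineSpan ℝ {x ∈ ratePolytope π | ∑ n, α n * x n = bCoef π α}).direction
      < Module.finrank ℝ (affineSpan ℝ (ratePolytope π)).direction - 1 := by
  classical
  -- Step 1: extract the bad subset U
  have hne : ¬ (∀ U : Finset (Fin N), U.Nonempty → U ≠ Finset.univ →
      (∃ i ∈ U, α i ≠ 0) → (∃ j ∈ Uᶜ, α j ≠ 0) →
      ∃ i ∈ U, ∃ j ∈ Uᶜ, ∃ m ∈ Finset.Icc 1 M, ∃ n ∈ Finset.Icc 1 M,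
        0 < α i ∧ 0 < α j ∧ α i * (m : ℝ) = α j * (n : ℝ)) := by
    intro h
    exact hαV ⟨hα, h⟩
  push_neg at hne
  obtain ⟨U, hUne, hUuniv, hUi, hUj, hnotie⟩ := hne
  obtain ⟨i0, hi0U, hi0⟩ := hUi
  obtain ⟨j0, hj0U, hj0⟩ := hUj
  have hi0pos : 0 < α i0 := (hα i0).lt_of_ne (Ne.symm hi0)
  have hj0pos : 0 < α j0 := (hα j0).lt_of_ne (Ne.symm hj0)
  have hj0notU : j0 ∉ U := Finset.mem_compl.mp hj0U
  have hij : i0 ≠ j0 := fun h => hj0notU (h ▸ hi0U)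
  -- Step 2: split α into β + γ
  set β : Fin N → ℝ := fun n => if n ∈ U then α n else 0 with hβdef
  set γ : Fin N → ℝ := fun n => if n ∈ U then 0 else α n with hγdef
  have hαβγ : ∀ n, α n = β n + γ n := by
    intro n; by_cases h : n ∈ U <;> simp [hβdef, hγdef, h]
  have hβ0 : ∀ n, 0 ≤ β n := by
    intro n; by_cases h : n ∈ U <;> simp [hβdef, h, hα n]
  have hγ0 : ∀ n, 0 ≤ γ n := by
    intro n; by_cases h : n ∈ U <;> simp [hγdef, h, hα n]
  have hdisj : ∀ n, β n = 0 ∨ γ n = 0 := by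
    intro n; by_cases h : n ∈ U
    · right; simp [hγdef, h]
    · left; simp [hβdef, h]
  have hβi0 : β i0 = α i0 := by simp [hβdef, hi0U]
  have hγi0 : γ i0 = 0 := by simp [hγdef, hi0U]
  have hβj0 : β j0 = 0 := by simp [hβdef, hj0notU]
  have hγj0 : γ j0 = α j0 := by simp [hγdef, hj0notU]
  have hCnn : ∀ (s : ChanState N K M) (n : Fin N) (k : Fin K), 0 ≤ Cmat s n k := by
    intro s n k; exact Nat.cast_nonneg _
  -- Step 3: the tie lemma
  have htie : ∀ (s : ChanState N K M) (k : Fin K),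
      Finset.univ.sup' Finset.univ_nonempty (fun n => β n * Cmat s n k)
        = Finset.univ.sup' Finset.univ_nonempty (fun n => γ n * Cmat s n k) →
      Finset.univ.sup' Finset.univ_nonempty (fun n => β n * Cmat s n k) = 0 := by
    intro s k hEq
    by_contra hA
    have hA0 : 0 ≤ Finset.univ.sup' Finset.univ_nonempty (fun n => β n * Cmat s n k) :=
      le_trans (mul_nonneg (hβ0 i0) (hCnn s i0 k))
        (Finset.le_sup' (fun n => β n * Cmat s n k) (Finset.mem_univ i0))
    have hApos : 0 < Finset.univ.sup' Finset.univ_nonempty (fun n => β n * Cmat s n k) :=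
      hA0.lt_of_ne (Ne.symm hA)
    obtain ⟨i, -, hi⟩ := Finset.exists_mem_eq_sup' Finset.univ_nonempty
      (fun n => β n * Cmat s n k)
    obtain ⟨j, -, hj⟩ := Finset.exists_mem_eq_sup' Finset.univ_nonempty
      (fun n => γ n * Cmat s n k)
    have hiP : 0 < β i * Cmat s i k := by rw [← hi]; exact hApos
    have hjP : 0 < γ j * Cmat s j k := by rw [← hj, ← hEq]; exact hApos
    have hβipos : 0 < β i := by
      rcases mul_pos_iff.mp hiP with ⟨h1, _⟩ | ⟨_, h2⟩
      · exact h1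
      · exact absurd h2 (not_lt.mpr (hCnn s i k))
    have hγjpos : 0 < γ j := by
      rcases mul_pos_iff.mp hjP with ⟨h1, _⟩ | ⟨_, h2⟩
      · exact h1
      · exact absurd h2 (not_lt.mpr (hCnn s j k))
    have hiU : i ∈ U := by
      by_contra h
      rw [hβdef] at hβipos; simp [h] at hβipos
    have hjUc : j ∈ Uᶜ := by
      rw [Finset.mem_compl]
      intro h
      rw [hγdef] at hγjpos; simp [h] at hγjpos
    have hαi : 0 < α i := by rw [hβdef] at hβipos; simpa [hiU] using hβipos
    have hαj : 0 < α j := by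
      rw [hγdef] at hγjpos; simpa [Finset.mem_compl.mp hjUc] using hγjpos
    have hCi : 0 < Cmat s i k := by
      rcases mul_pos_iff.mp hiP with ⟨_, h2⟩ | ⟨h1, _⟩
      · exact h2
      · exact absurd h1 (not_lt.mpr (hβ0 i))
    have hCj : 0 < Cmat s j k := by
      rcases mul_pos_iff.mp hjP with ⟨_, h2⟩ | ⟨h1, _⟩
      · exact h2
      · exact absurd h1 (not_lt.mpr (hγ0 j))
    have hCi' : 0 < (s i k : ℕ) := by
      simp only [Cmat] at hCi
      exact_mod_cast hCi
    have hCj' : 0 < (s j k : ℕ) := by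
      simp only [Cmat] at hCj
      exact_mod_cast hCj
    have hmiM : (s i k : ℕ) ≤ M := Nat.lt_succ_iff.mp (s i k).isLt
    have hmjM : (s j k : ℕ) ≤ M := Nat.lt_succ_iff.mp (s j k).isLt
    have key : α i * ((s i k : ℕ) : ℝ) = α j * ((s j k : ℕ) : ℝ) := by
      have h1 : β i = α i := by simp [hβdef, hiU]
      have h2 : γ j = α j := by simp [hγdef, Finset.mem_compl.mp hjUc]
      have h3 : β i * Cmat s i k = γ j * Cmat s j k := by rw [← hi, ← hj, hEq]
      rw [h1, h2] at h3
      exact h3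
    exact hnotie i hiU j hjUc (s i k : ℕ) (Finset.mem_Icc.mpr ⟨hCi', hmiM⟩)
      (s j k : ℕ) (Finset.mem_Icc.mpr ⟨hCj', hmjM⟩) hαi hαj key
  -- Step 4: dot products with rate vectors
  have hdot : ∀ (θ : Fin N → ℝ) (g : ChanState N K M → Fin K → Fin N),
      ∑ n, θ n * rateVec π g n = ∑ s, π s * weight θ (Cmat s) (g s) := by
    intro θ g
    simp only [rateVec, weight, Finset.mul_sum]
    rw [Finset.sum_comm]
    exact Finset.sum_congr rfl fun s _ => Finset.sum_congr rfl fun n _ =>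
      Finset.sum_congr rfl fun k _ => by ring
  -- the two face constants
  set cβ : ℝ := ∑ s, π s * ∑ k,
    (if Finset.univ.sup' Finset.univ_nonempty (fun n => γ n * Cmat s n k)
        < Finset.univ.sup' Finset.univ_nonempty (fun n => β n * Cmat s n k)
      then Finset.univ.sup' Finset.univ_nonempty (fun n => β n * Cmat s n k) else 0) with hcβdef
  set cγ : ℝ := ∑ s, π s * ∑ k,
    (if Finset.univ.sup' Finset.univ_nonempty (fun n => β n * Cmat s n k)
        < Finset.univ.sup' Finset.univ_nonempty (fun n => γ n * Cmat s n k)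
      then Finset.univ.sup' Finset.univ_nonempty (fun n => γ n * Cmat s n k) else 0) with hcγdef
  -- Step 5: vertex lemma
  have hvert : ∀ g : ChanState N K M → Fin K → Fin N,
      ∑ n, α n * rateVec π g n = bCoef π α →
      (∑ n, β n * rateVec π g n = cβ) ∧ (∑ n, γ n * rateVec π g n = cγ) := by
    intro g hg
    rw [hdot] at hg
    have hstate : ∀ s : ChanState N K M, weight α (Cmat s) (g s) = maxWeight α (Cmat s) := by
      have hle : ∀ s ∈ (Finset.univ : Finset (ChanState N K M)),
          π s * weight α (Cmat s) (g s) ≤ π s * maxWeight α (Cmat s) := fun s _ =>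
        mul_le_mul_of_nonneg_left (Finset.le_sup' (weight α (Cmat s)) (Finset.mem_univ (g s)))
          (hπpos s).le
      have h2 := (Finset.sum_eq_sum_iff_of_le hle).mp (by rw [hg]; rfl)
      intro s
      exact mul_left_cancel₀ (hπpos s).ne' (h2 s (Finset.mem_univ s))
    have hcol : ∀ (s : ChanState N K M) (k : Fin K),
        α (g s k) * Cmat s (g s k) k
          = Finset.univ.sup' Finset.univ_nonempty (fun n => α n * Cmat s n k) := by
      intro s k
      have h1 := hstate s
      rw [weight_eq, maxWeight_eq] at h1
      have hle : ∀ k ∈ (Finset.univ : Finset (Fin K)),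
          α (g s k) * Cmat s (g s k) k
            ≤ Finset.univ.sup' Finset.univ_nonempty (fun n => α n * Cmat s n k) := fun k _ =>
        Finset.le_sup' (fun n => α n * Cmat s n k) (Finset.mem_univ (g s k))
      exact (Finset.sum_eq_sum_iff_of_le hle).mp h1 k (Finset.mem_univ k)
    have hβcol : ∀ (s : ChanState N K M) (k : Fin K),
        β (g s k) * Cmat s (g s k) k =
          (if Finset.univ.sup' Finset.univ_nonempty (fun n => γ n * Cmat s n k)
              < Finset.univ.sup' Finset.univ_nonempty (fun n => β n * Cmat s n k)
            then Finset.univ.sup' Finset.univ_nonempty (fun n => β n * Cmat s n k) else 0) := by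
      intro s k
      exact col_opt β γ α (fun n => Cmat s n k) hβ0 hγ0 (fun n => hCnn s n k) hαβγ hdisj
        (htie s k) (g s k) (hcol s k)
    have hγcol : ∀ (s : ChanState N K M) (k : Fin K),
        γ (g s k) * Cmat s (g s k) k =
          (if Finset.univ.sup' Finset.univ_nonempty (fun n => β n * Cmat s n k)
              < Finset.univ.sup' Finset.univ_nonempty (fun n => γ n * Cmat s n k)
            then Finset.univ.sup' Finset.univ_nonempty (fun n => γ n * Cmat s n k) else 0) := by
      intro s k
      refine col_opt γ β α (fun n => Cmat s n k) hγ0 hβ0 (fun n => hCnn s n k)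
        (fun n => by rw [hαβγ n]; ring) (fun n => (hdisj n).symm) ?_ (g s k) (hcol s k)
      intro h
      rw [h]
      exact htie s k h.symm
    constructor
    · rw [hdot, hcβdef]
      refine Finset.sum_congr rfl fun s _ => ?_
      congr 1
      rw [weight_eq]
      exact Finset.sum_congr rfl fun k _ => hβcol s k
    · rw [hdot, hcγdef]
      refine Finset.sum_congr rfl fun s _ => ?_
      congr 1
      rw [weight_eq]
      exact Finset.sum_congr rfl fun k _ => hγcol s k
  -- Step 6: the face is contained in two hyperplanes
  have hface : ∀ x : Fin N → ℝ, x ∈ ratePolytope π → (∑ n, α n * x n = bCoef π α) →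
      (∑ n, β n * x n = cβ) ∧ (∑ n, γ n * x n = cγ) := by
    intro x hx hxα
    have hSfin : ({r | ∃ g : ChanState N K M → Fin K → Fin N, r = rateVec π g} :
        Set (Fin N → ℝ)).Finite := by
      have h1 : ({r | ∃ g : ChanState N K M → Fin K → Fin N, r = rateVec π g} :
          Set (Fin N → ℝ)) = Set.range (rateVec π) := by
        ext r; simp [Set.mem_setOf_eq, Set.mem_range, eq_comm]
      rw [h1]
      exact Set.finite_range _
    have hPt : ratePolytope π = convexHull ℝ ((hSfin.toFinset : Finset (Fin N → ℝ)) :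
        Set (Fin N → ℝ)) := by
      rw [ratePolytope, hSfin.coe_toFinset]
    set t : Finset (Fin N → ℝ) := hSfin.toFinset with htdef
    rw [hPt, Finset.convexHull_eq, Set.mem_setOf_eq] at hx
    obtain ⟨w, hw0, hw1, hwx⟩ := hx
    rw [Finset.centerMass_eq_of_sum_1 _ _ hw1] at hwx
    have hdotx : ∀ θ : Fin N → ℝ, ∑ n, θ n * x n = ∑ y ∈ t, w y * ∑ n, θ n * y n := by
      intro θ
      rw [← hwx]
      simp only [Finset.sum_apply, Pi.smul_apply, smul_eq_mul, id_eq, Finset.mul_sum]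
      rw [Finset.sum_comm]
      exact Finset.sum_congr rfl fun y _ => Finset.sum_congr rfl fun n _ => by ring
    have hyP : ∀ y ∈ t, ∃ g : ChanState N K M → Fin K → Fin N, y = rateVec π g := by
      intro y hy
      exact hSfin.mem_toFinset.mp hy
    have hub : ∀ y ∈ t, ∑ n, α n * y n ≤ bCoef π α := by
      intro y hy
      obtain ⟨g, rfl⟩ := hyP y hy
      rw [hdot]
      exact Finset.sum_le_sum fun s _ =>
        mul_le_mul_of_nonneg_left (Finset.le_sup' (weight α (Cmat s)) (Finset.mem_univ (g s)))
          (hπpos s).le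
    have hzero : ∀ y ∈ t, w y * (bCoef π α - ∑ n, α n * y n) = 0 := by
      have hsum : ∑ y ∈ t, w y * (bCoef π α - ∑ n, α n * y n) = 0 := by
        have h1 : ∑ y ∈ t, w y * (bCoef π α - ∑ n, α n * y n)
            = (∑ y ∈ t, w y) * bCoef π α - ∑ y ∈ t, w y * ∑ n, α n * y n := by
          rw [Finset.sum_mul, ← Finset.sum_sub_distrib]
          exact Finset.sum_congr rfl fun y _ => by ring
        rw [h1, hw1, one_mul, ← hdotx α, hxα, sub_self]
      exact (Finset.sum_eq_zero_iff_of_nonneg fun y hy =>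
        mul_nonneg (hw0 y hy) (sub_nonneg.mpr (hub y hy))).mp hsum
    have hopty : ∀ y ∈ t, w y ≠ 0 → (∑ n, β n * y n = cβ) ∧ (∑ n, γ n * y n = cγ) := by
      intro y hy hwy
      obtain ⟨g, rfl⟩ := hyP y hy
      apply hvert
      have h2 := hzero _ hy
      rcases mul_eq_zero.mp h2 with h | h
      · exact absurd h hwy
      · linarith [sub_eq_zero.mp h]
    constructor
    · rw [hdotx β]
      have h3 : ∀ y ∈ t, w y * ∑ n, β n * y n = w y * cβ := by
        intro y hy
        by_cases hwy : w y = 0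
        · rw [hwy, zero_mul, zero_mul]
        · rw [(hopty y hy hwy).1]
      rw [Finset.sum_congr rfl h3, ← Finset.sum_mul, hw1, one_mul]
    · rw [hdotx γ]
      have h3 : ∀ y ∈ t, w y * ∑ n, γ n * y n = w y * cγ := by
        intro y hy
        by_cases hwy : w y = 0
        · rw [hwy, zero_mul, zero_mul]
        · rw [(hopty y hy hwy).2]
      rw [Finset.sum_congr rfl h3, ← Finset.sum_mul, hw1, one_mul]
  -- Step 7: the linear map L and the kernel bound
  set L : (Fin N → ℝ) →ₗ[ℝ] ℝ × ℝ :=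
    { toFun := fun x => (∑ n, β n * x n, ∑ n, γ n * x n)
      map_add' := by
        intro x y
        simp only [Pi.add_apply, Prod.mk_add_mk, Prod.mk.injEq]
        constructor <;>
          (rw [← Finset.sum_add_distrib]; exact Finset.sum_congr rfl fun n _ => by ring)
      map_smul' := by
        intro cc x
        simp only [Pi.smul_apply, smul_eq_mul, RingHom.id_apply, Prod.smul_mk, Prod.mk.injEq]
        constructor <;>
          (rw [Finset.mul_sum]; exact Finset.sum_congr rfl fun n _ => by ring) } with hLdef
  have hLapply : ∀ x : Fin N → ℝ, L x = (∑ n, β n * x n, ∑ n, γ n * x n) := fun x => rfl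
  have hdirF : vectorSpan ℝ {x ∈ ratePolytope π | ∑ n, α n * x n = bCoef π α}
      ≤ LinearMap.ker L := by
    rw [vectorSpan_def, Submodule.span_le]
    rintro v hv
    rw [Set.mem_vsub] at hv
    obtain ⟨x, hx, y, hy, rfl⟩ := hv
    obtain ⟨hx1, hx2⟩ := hx
    obtain ⟨hy1, hy2⟩ := hy
    have hxL : L x = (cβ, cγ) := by
      obtain ⟨h1, h2⟩ := hface x hx1 hx2
      rw [hLapply, h1, h2]
    have hyL : L y = (cβ, cγ) := by
      obtain ⟨h1, h2⟩ := hface y hy1 hy2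
      rw [hLapply, h1, h2]
    rw [SetLike.mem_coe, LinearMap.mem_ker, vsub_eq_sub, map_sub, hxL, hyL, sub_self]
  -- Step 8: L is surjective, so its kernel has dimension N - 2
  have hLsingle : ∀ p : Fin N, L (fun j => if p = j then (1:ℝ) else 0) = (β p, γ p) := by
    intro p
    rw [hLapply]
    simp [mul_ite, Finset.sum_ite_eq]
  have hsurj : LinearMap.range L = ⊤ := by
    rw [LinearMap.range_eq_top]
    intro p
    refine ⟨(p.1 / α i0) • (fun j => if i0 = j then (1:ℝ) else 0)
      + (p.2 / α j0) • (fun j => if j0 = j then (1:ℝ) else 0), ?_⟩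
    rw [map_add, _root_.map_smul, _root_.map_smul, hLsingle i0, hLsingle j0, hβi0, hγi0, hβj0, hγj0]
    have h1 : p.1 / α i0 * α i0 = p.1 := div_mul_cancel₀ _ hi0pos.ne'
    have h2 : p.2 / α j0 * α j0 = p.2 := div_mul_cancel₀ _ hj0pos.ne'
    simp [Prod.ext_iff, smul_eq_mul, h1, h2]
  have hker : Module.finrank ℝ (LinearMap.ker L) = N - 2 := by
    have h1 := LinearMap.finrank_range_add_finrank_ker L
    rw [hsurj, finrank_top] at h1
    have h2 : Module.finrank ℝ (ℝ × ℝ) = 2 := by simp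
    have h3 : Module.finrank ℝ (Fin N → ℝ) = N := Module.finrank_fin_fun ℝ
    omega
  have hFrank : Module.finrank ℝ
      (vectorSpan ℝ {x ∈ ratePolytope π | ∑ n, α n * x n = bCoef π α}) ≤ N - 2 :=
    hker ▸ Submodule.finrank_mono hdirF
  -- Step 9: the polytope is full-dimensional
  set e : Fin N → Fin N → ℝ := fun i j => if i = j then (1:ℝ) else 0 with hedef
  set s0 : ChanState N K M := fun n _ => if n = i0 then Fin.last M else 0 with hs0def
  set sAll : ChanState N K M := fun _ _ => Fin.last M with hsAlldef
  set c : Fin N → ℝ := fun n0 => ∑ s, π s * ∑ k, Cmat s n0 k with hcdef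
  set v : Fin N → Fin N → ℝ := fun n0 => rateVec π (fun _ _ => n0) with hvdef
  have hv : ∀ n0, v n0 = c n0 • e n0 := by
    intro n0
    funext m
    rw [hvdef, hcdef, hedef]
    simp only [rateVec, allocMat, Pi.smul_apply, smul_eq_mul]
    by_cases h : n0 = m
    · subst h
      simp [Finset.mul_sum]
    · simp [h, fun hc => h hc]
  have hMpos : (0:ℝ) < (M:ℝ) := by exact_mod_cast Nat.pos_of_ne_zero (NeZero.ne M)
  have hcpos : ∀ n0, 0 < c n0 := by
    intro n0
    rw [hcdef]
    apply Finset.sum_pos'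
    · intro s _
      exact mul_nonneg (hπpos s).le (Finset.sum_nonneg fun k _ => hCnn s n0 k)
    · refine ⟨sAll, Finset.mem_univ _, ?_⟩
      apply mul_pos (hπpos sAll)
      apply Finset.sum_pos
      · intro k _
        rw [hsAlldef]
        simp only [Cmat, Fin.val_last]
        exact hMpos
      · exact Finset.univ_nonempty
  set g1 : ChanState N K M → Fin K → Fin N := fun s _ => if s = s0 then i0 else j0 with hg1def
  set a : ℝ := π s0 * ∑ k, Cmat s0 i0 k with hadef
  have hapos : 0 < a := by
    rw [hadef]
    apply mul_pos (hπpos s0)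
    apply Finset.sum_pos
    · intro k _
      rw [hs0def]
      simp only [Cmat, if_pos rfl, Fin.val_last]
      exact hMpos
    · exact Finset.univ_nonempty
  have hCs0 : ∀ (m : Fin N) (k : Fin K), m ≠ i0 → Cmat s0 m k = 0 := by
    intro m k hm
    rw [hs0def]
    simp [Cmat, hm]
  have hwv : rateVec π g1 - v j0 = a • e i0 := by
    funext m
    simp only [Pi.sub_apply, Pi.smul_apply, smul_eq_mul]
    rw [hvdef]
    simp only [rateVec, allocMat]
    rw [← Finset.sum_sub_distrib]
    rw [Finset.sum_eq_single_of_mem s0 (Finset.mem_univ s0)]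
    · rw [hg1def]
      simp only [eq_self_iff_true, if_true]
      by_cases h : m = i0
      · have e1 : (if i0 = m then (1:ℝ) else 0) = 1 := if_pos h.symm
        have e2 : (if j0 = m then (1:ℝ) else 0) = 0 := by
          apply if_neg
          rw [h]
          exact fun hc => hij hc.symm
        have e3 : e i0 m = 1 := by simp only [hedef]; exact e1
        simp only [e1, e2, mul_one, mul_zero, Finset.sum_const_zero, sub_zero, e3]
        rw [hadef, h]
      · have e1 : (if i0 = m then (1:ℝ) else 0) = 0 := if_neg fun hc => h hc.symm
        have e3 : e i0 m = 0 := by simp only [hedef]; exact e1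
        have h2 : ∀ k : Fin K, Cmat s0 m k = 0 := fun k => hCs0 m k h
        simp only [e1, e3, h2, mul_zero, zero_mul, Finset.sum_const_zero, sub_zero]
    · intro s _ hs
      rw [hg1def]
      simp only [if_neg hs, sub_self]
  have hmemP : ∀ g, rateVec π g ∈ ratePolytope π := fun g =>
    subset_convexHull ℝ _ ⟨g, rfl⟩
  have hvP : ∀ n0, v n0 ∈ ratePolytope π := by
    intro n0
    rw [hvdef]
    exact hmemP _
  have hei0 : e i0 ∈ vectorSpan ℝ (ratePolytope π) := by
    have hsub : rateVec π g1 -ᵥ v j0 ∈ vectorSpan ℝ (ratePolytope π) :=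
      vsub_mem_vectorSpan ℝ (hmemP g1) (hvP j0)
    rw [vsub_eq_sub] at hsub
    have h1 : e i0 = a⁻¹ • (rateVec π g1 - v j0) := by
      rw [hwv, smul_smul, inv_mul_cancel₀ hapos.ne', one_smul]
    rw [h1]
    exact Submodule.smul_mem _ _ hsub
  have hej0 : e j0 ∈ vectorSpan ℝ (ratePolytope π) := by
    have hsub : v i0 -ᵥ v j0 ∈ vectorSpan ℝ (ratePolytope π) :=
      vsub_mem_vectorSpan ℝ (hvP i0) (hvP j0)
    rw [vsub_eq_sub] at hsub
    have h1 : e j0 = (c j0)⁻¹ • (c i0 • e i0 - (v i0 - v j0)) := by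
      rw [hv i0, hv j0]
      rw [show c i0 • e i0 - (c i0 • e i0 - c j0 • e j0) = c j0 • e j0 by module]
      rw [smul_smul, inv_mul_cancel₀ (hcpos j0).ne', one_smul]
    rw [h1]
    exact Submodule.smul_mem _ _ (Submodule.sub_mem _ (Submodule.smul_mem _ _ hei0) hsub)
  have hen : ∀ n, e n ∈ vectorSpan ℝ (ratePolytope π) := by
    intro n
    have hsub : v n -ᵥ v j0 ∈ vectorSpan ℝ (ratePolytope π) :=
      vsub_mem_vectorSpan ℝ (hvP n) (hvP j0)
    rw [vsub_eq_sub] at hsub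
    have h1 : e n = (c n)⁻¹ • ((v n - v j0) + c j0 • e j0) := by
      rw [hv n, hv j0]
      rw [show c n • e n - c j0 • e j0 + c j0 • e j0 = c n • e n by module]
      rw [smul_smul, inv_mul_cancel₀ (hcpos n).ne', one_smul]
    rw [h1]
    exact Submodule.smul_mem _ _ (Submodule.add_mem _ hsub (Submodule.smul_mem _ _ hej0))
  have htop : vectorSpan ℝ (ratePolytope π) = ⊤ := by
    rw [eq_top_iff]
    intro x _
    rw [pi_eq_sum_univ x]
    exact Submodule.sum_mem _ fun i _ => Submodule.smul_mem _ _ (hen i)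
  have hdimP : Module.finrank ℝ (affineSpan ℝ (ratePolytope π)).direction = N := by
    rw [direction_affineSpan, htop, finrank_top, Module.finrank_fin_fun]
  have h2N : 2 ≤ N := by
    have h1 : 1 < Fintype.card (Fin N) := Fintype.one_lt_card_iff.mpr ⟨i0, j0, hij⟩
    simp at h1; omega
  rw [hdimP, direction_affineSpan]
  refine lt_of_le_of_lt hFrank ?_
  exact Nat.sub_lt_sub_left h2N (by norm_num)
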